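/- For each n ∈ ℕ, let μₙ, μₙ* be positive Borel measures on ℝ with μₙ ≤ μₙ*, and let Kₙ, Kₙ* : ℝ × ℝ → ℝ be symmetric kernels whose sections are square-integrable with respect to both measures and which satisfy, for all ξ, β ∈ ℝ: ∫ Kₙ(ξ,ζ)Kₙ(β,ζ) dμₙ(ζ) = Kₙ(ξ,β); ∫ Kₙ*(ξ,ζ)Kₙ*(β,ζ) dμₙ*(ζ) = Kₙ*(ξ,β); and ∫ Kₙ*(ξ,ζ)Kₙ(β,ζ) dμₙ(ζ) = Kₙ*(ξ,β). Let ξₙ, βₙ ∈ ℝ be such that Kₙ(ξₙ,ξₙ) > 0 for all n, Kₙ*(ξₙ,ξₙ)/Kₙ(ξₙ,ξₙ) → 1 as n → ∞, and the sequence Kₙ(βₙ,βₙ)/Kₙ(ξₙ,ξₙ) is bounded. Then ( Kₙ(ξₙ,βₙ) − Kₙ*(ξₙ,βₙ) ) / Kₙ(ξₙ,ξₙ) → 0 as n → ∞. -/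

import Mathlib

open MeasureTheory Set Filter

private lemma l2_integrable_mul {μ : Measure ℝ} {f g : ℝ → ℝ}
    (hf : MemLp f 2 μ) (hg : MemLp g 2 μ) :
    Integrable (fun x => f x * g x) μ := by
  have h : MemLp (f • g) 1 μ := by
    have : ENNReal.HolderTriple 2 2 1 := ⟨by
      rw [show (1:ENNReal)⁻¹ = 2⁻¹ + 2⁻¹ by rw [ENNReal.inv_two_add_inv_two, inv_one]]⟩
    exact hg.smul hf
  rw [← memLp_one_iff_integrable]
  exact h

private lemma integral_cauchy_schwarz {μ : Measure ℝ} {f g : ℝ → ℝ}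
    (hf : MemLp f 2 μ) (hg : MemLp g 2 μ) :
    (∫ x, f x * g x ∂μ) ^ 2 ≤ (∫ x, f x * f x ∂μ) * ∫ x, g x * g x ∂μ := by
  have hff := l2_integrable_mul hf hf
  have hgg := l2_integrable_mul hg hg
  have hfg := l2_integrable_mul hf hg
  have key : ∀ t : ℝ, 0 ≤ (∫ x, g x * g x ∂μ) * (t * t)
      + (2 * ∫ x, f x * g x ∂μ) * t + ∫ x, f x * f x ∂μ := by
    intro t
    have h1 : (∫ x, g x * g x ∂μ) * (t * t) + (2 * ∫ x, f x * g x ∂μ) * t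
        + ∫ x, f x * f x ∂μ = ∫ x, (f x + t * g x) * (f x + t * g x) ∂μ := by
      have iA : Integrable (fun x => f x * f x + 2 * t * (f x * g x)) μ :=
        hff.add (hfg.const_mul (2 * t))
      have iB : Integrable (fun x => t * t * (g x * g x)) μ := hgg.const_mul (t * t)
      rw [show (fun x => (f x + t * g x) * (f x + t * g x))
          = fun x => (f x * f x + 2 * t * (f x * g x)) + t * t * (g x * g x) by
        funext x; ring]
      rw [integral_add iA iB, integral_add hff (hfg.const_mul (2 * t)),
        integral_const_mul, integral_const_mul]
      ring
    rw [h1]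
    exact integral_nonneg fun x => mul_self_nonneg _
  have hd := discrim_le_zero key
  rw [discrim] at hd
  nlinarith [hd]

/-- **Comparison step for universality limits.** If for each `n` the kernels `Kₙ ≤`-wise
reproduce measures `μₙ ≤ μₙ*`, the diagonal ratios `Kₙ*(ξₙ,ξₙ)/Kₙ(ξₙ,ξₙ)` tend to `1`,
and `Kₙ(βₙ,βₙ)/Kₙ(ξₙ,ξₙ)` is bounded, then the normalized off-diagonal difference
`(Kₙ(ξₙ,βₙ) − Kₙ*(ξₙ,βₙ))/Kₙ(ξₙ,ξₙ)` tends to `0`. -/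
theorem comparison_step_universality
    (μ μs : ℕ → Measure ℝ) (hle : ∀ n, μ n ≤ μs n)
    (K K' : ℕ → ℝ → ℝ → ℝ)
    (hKsymm : ∀ n, ∀ ξ β : ℝ, K n ξ β = K n β ξ)
    (hK'symm : ∀ n, ∀ ξ β : ℝ, K' n ξ β = K' n β ξ)
    (hKL2 : ∀ n, ∀ ξ : ℝ, MemLp (K n ξ) 2 (μ n) ∧ MemLp (K n ξ) 2 (μs n))
    (hK'L2 : ∀ n, ∀ ξ : ℝ, MemLp (K' n ξ) 2 (μ n) ∧ MemLp (K' n ξ) 2 (μs n))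
    (hrepK : ∀ n, ∀ ξ β : ℝ, ∫ ζ, K n ξ ζ * K n β ζ ∂(μ n) = K n ξ β)
    (hrepK' : ∀ n, ∀ ξ β : ℝ, ∫ ζ, K' n ξ ζ * K' n β ζ ∂(μs n) = K' n ξ β)
    (hmixed : ∀ n, ∀ ξ β : ℝ, ∫ ζ, K' n ξ ζ * K n β ζ ∂(μ n) = K' n ξ β)
    (ξ β : ℕ → ℝ)
    (hpos : ∀ n, 0 < K n (ξ n) (ξ n))
    (hdiag : Tendsto (fun n => K' n (ξ n) (ξ n) / K n (ξ n) (ξ n)) atTop (nhds 1))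
    (hbdd : ∃ B : ℝ, ∀ n, |K n (β n) (β n) / K n (ξ n) (ξ n)| ≤ B) :
    Tendsto (fun n => (K n (ξ n) (β n) - K' n (ξ n) (β n)) / K n (ξ n) (ξ n))
      atTop (nhds 0) := by
  obtain ⟨B, hB⟩ := hbdd
  -- Step 1: pointwise Lubinsky inequality and diagonal domination
  have main : ∀ n, (K n (ξ n) (β n) - K' n (ξ n) (β n)) ^ 2
      ≤ (K n (ξ n) (ξ n) - K' n (ξ n) (ξ n)) * K n (β n) (β n)
      ∧ K' n (ξ n) (ξ n) ≤ K n (ξ n) (ξ n) ∧ 0 ≤ K n (β n) (β n) := by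
    intro n
    set a := ξ n with ha
    set b := β n with hb
    have hfμ : MemLp (K n a) 2 (μ n) := (hKL2 n a).1
    have hgμ : MemLp (K' n a) 2 (μ n) := (hK'L2 n a).1
    have hhμ : MemLp (K n b) 2 (μ n) := (hKL2 n b).1
    -- difference function
    have hdμ : MemLp (fun ζ => K n a ζ - K' n a ζ) 2 (μ n) := hfμ.sub hgμ
    -- ∫ (f-g) h = K a b - K' a b
    have hI1 : ∫ ζ, (K n a ζ - K' n a ζ) * K n b ζ ∂(μ n)
        = K n a b - K' n a b := by
      have : ∀ ζ, (K n a ζ - K' n a ζ) * K n b ζ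
          = K n a ζ * K n b ζ - K' n a ζ * K n b ζ := fun ζ => by ring
      simp_rw [this]
      rw [integral_sub (l2_integrable_mul hfμ hhμ) (l2_integrable_mul hgμ hhμ),
        hrepK n a b, hmixed n a b]
    -- ∫ g² dμ ≤ K' a a
    have hg2 : ∫ ζ, K' n a ζ * K' n a ζ ∂(μ n) ≤ K' n a a := by
      rw [← hrepK' n a a]
      exact integral_mono_measure (hle n)
        (Eventually.of_forall fun ζ => mul_self_nonneg _)
        (l2_integrable_mul (hK'L2 n a).2 (hK'L2 n a).2)
    -- expand ∫ (f-g)²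
    have hE : ∫ ζ, (K n a ζ - K' n a ζ) * (K n a ζ - K' n a ζ) ∂(μ n)
        = K n a a - 2 * K' n a a + ∫ ζ, K' n a ζ * K' n a ζ ∂(μ n) := by
      have hfg : ∫ ζ, K n a ζ * K' n a ζ ∂(μ n) = K' n a a := by
        rw [← hmixed n a a]; congr 1; funext ζ; ring
      have : ∀ ζ, (K n a ζ - K' n a ζ) * (K n a ζ - K' n a ζ)
          = K n a ζ * K n a ζ - 2 * (K n a ζ * K' n a ζ) + K' n a ζ * K' n a ζ :=
        fun ζ => by ring
      simp_rw [this]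
      have iA : Integrable (fun ζ => K n a ζ * K n a ζ - 2 * (K n a ζ * K' n a ζ)) (μ n) :=
        (l2_integrable_mul hfμ hfμ).sub ((l2_integrable_mul hfμ hgμ).const_mul 2)
      rw [integral_add iA (l2_integrable_mul hgμ hgμ),
        integral_sub (l2_integrable_mul hfμ hfμ)
          ((l2_integrable_mul hfμ hgμ).const_mul 2),
        integral_const_mul, hrepK n a a, hfg]
    have hEle : ∫ ζ, (K n a ζ - K' n a ζ) * (K n a ζ - K' n a ζ) ∂(μ n)
        ≤ K n a a - K' n a a := by rw [hE]; linarith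
    have hEnn : 0 ≤ ∫ ζ, (K n a ζ - K' n a ζ) * (K n a ζ - K' n a ζ) ∂(μ n) :=
      integral_nonneg fun ζ => mul_self_nonneg _
    have hbbnn : 0 ≤ K n b b := by
      rw [← hrepK n b b]; exact integral_nonneg fun ζ => mul_self_nonneg _
    have hcs := integral_cauchy_schwarz (μ := μ n) hdμ hhμ
    rw [hI1, hrepK n b b] at hcs
    refine ⟨hcs.trans (mul_le_mul_of_nonneg_right hEle hbbnn), by linarith, hbbnn⟩
  -- Step 2: squeeze the squared normalized difference
  have hsq : Tendsto (fun n => ((K n (ξ n) (β n) - K' n (ξ n) (β n))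
      / K n (ξ n) (ξ n)) ^ 2) atTop (nhds 0) := by
    have hub : ∀ n, ((K n (ξ n) (β n) - K' n (ξ n) (β n)) / K n (ξ n) (ξ n)) ^ 2
        ≤ B * (1 - K' n (ξ n) (ξ n) / K n (ξ n) (ξ n)) := by
      intro n
      obtain ⟨h1, h2, h3⟩ := main n
      have hc := hpos n
      have hBn : K n (β n) (β n) / K n (ξ n) (ξ n) ≤ B :=
        (le_abs_self _).trans (hB n)
      have hfac : (0:ℝ) ≤ 1 - K' n (ξ n) (ξ n) / K n (ξ n) (ξ n) := by
        rw [sub_nonneg, div_le_one hc]; exact h2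
      have key : ((K n (ξ n) (β n) - K' n (ξ n) (β n)) / K n (ξ n) (ξ n)) ^ 2
          ≤ (1 - K' n (ξ n) (ξ n) / K n (ξ n) (ξ n))
            * (K n (β n) (β n) / K n (ξ n) (ξ n)) := by
        rw [div_pow, one_sub_div hc.ne', div_mul_div_comm,
          show K n (ξ n) (ξ n) * K n (ξ n) (ξ n) = K n (ξ n) (ξ n) ^ 2 by ring]
        gcongr
      calc ((K n (ξ n) (β n) - K' n (ξ n) (β n)) / K n (ξ n) (ξ n)) ^ 2
          ≤ (1 - K' n (ξ n) (ξ n) / K n (ξ n) (ξ n))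
            * (K n (β n) (β n) / K n (ξ n) (ξ n)) := key
        _ ≤ (1 - K' n (ξ n) (ξ n) / K n (ξ n) (ξ n)) * B :=
            mul_le_mul_of_nonneg_left hBn hfac
        _ = B * (1 - K' n (ξ n) (ξ n) / K n (ξ n) (ξ n)) := mul_comm _ _
    have hrhs : Tendsto (fun n => B * (1 - K' n (ξ n) (ξ n) / K n (ξ n) (ξ n)))
        atTop (nhds 0) := by
      have : Tendsto (fun n => 1 - K' n (ξ n) (ξ n) / K n (ξ n) (ξ n))
          atTop (nhds 0) := by
        have := (tendsto_const_nhds (x := (1:ℝ)) (f := atTop)).sub hdiag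
        simpa using this
      simpa using this.const_mul B
    exact tendsto_of_tendsto_of_tendsto_of_le_of_le tendsto_const_nhds hrhs
      (fun n => sq_nonneg _) hub
  -- Step 3: conclude
  have habs : Tendsto (fun n => |(K n (ξ n) (β n) - K' n (ξ n) (β n))
      / K n (ξ n) (ξ n)|) atTop (nhds 0) := by
    have hsqrt : Tendsto Real.sqrt (nhds 0) (nhds 0) := by
      simpa using Real.continuous_sqrt.tendsto 0
    have := hsqrt.comp hsq
    simpa [Function.comp_def, Real.sqrt_sq_eq_abs] using this
  exact (tendsto_zero_iff_abs_tendsto_zero _).mpr habs
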